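/- Let S*_t := min{ x : H*_t(x) = min_{y∈ℝ} H*_t(y) } and s*_t := max{ x ≤ S*_t : H*_t(x) = H*_t(S*_t) + K_t } (these exist). Then the (s*, S*) policy is optimal: v^{s*,S*}_t(x) = V*_t(x) − c_t·x for every x ∈ ℝ and every t = 0,…,T−1, and for any pairs (σ_t, Σ_t) with σ_t ≤ Σ_t one has v^{σ,Σ}_t(x) ≥ V*_t(x) − c_t·x for every x ∈ ℝ and every t = 0,…,T−1. -/

import Mathlib

open MeasureTheory Filter Set

/-- K-convexity. -/
def KCfun (Kv : ℝ) (f : ℝ → ℝ) : Prop :=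
  ∀ a b u v : ℝ, a ≤ b → 0 ≤ u → 0 ≤ v → u + v = 1 →
    f (u * a + v * b) ≤ u * f a + v * (f b + Kv)

lemma kc_mono {Kv Kv' : ℝ} {f : ℝ → ℝ} (h : KCfun Kv f) (hle : Kv ≤ Kv') : KCfun Kv' f := by
  intro a b u v hab hu hv huv
  calc f (u * a + v * b) ≤ u * f a + v * (f b + Kv) := h a b u v hab hu hv huv
    _ ≤ u * f a + v * (f b + Kv') := by nlinarith

lemma kc_of_convexOn {f : ℝ → ℝ} (hf : ConvexOn ℝ Set.univ f) {Kv : ℝ} (hK : 0 ≤ Kv) :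
    KCfun Kv f := by
  intro a b u v hab hu hv huv
  have := hf.2 (Set.mem_univ a) (Set.mem_univ b) hu hv huv
  simp only [smul_eq_mul] at this
  nlinarith

lemma kc_add {K1 K2 : ℝ} {f g : ℝ → ℝ} (hf : KCfun K1 f) (hg : KCfun K2 g) :
    KCfun (K1 + K2) (fun x => f x + g x) := by
  intro a b u v hab hu hv huv
  have h1 := hf a b u v hab hu hv huv
  have h2 := hg a b u v hab hu hv huv
  dsimp only
  nlinarith

lemma exists_uv {a b x : ℝ} (h1 : a ≤ x) (h2 : x ≤ b) :
    ∃ u v : ℝ, 0 ≤ u ∧ 0 ≤ v ∧ u + v = 1 ∧ u * a + v * b = x := by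
  rcases eq_or_lt_of_le (h1.trans h2) with h | h
  · exact ⟨1, 0, zero_le_one, le_refl 0, by norm_num,
      by rw [one_mul, zero_mul, add_zero]; linarith⟩
  · have hba : (0:ℝ) < b - a := by linarith
    refine ⟨(b - x) / (b - a), (x - a) / (b - a), div_nonneg (by linarith) (by linarith),
      div_nonneg (by linarith) (by linarith), ?_, ?_⟩
    · rw [← add_div, div_eq_one_iff_eq (ne_of_gt hba)]; ring
    · rw [div_mul_eq_mul_div, div_mul_eq_mul_div, ← add_div,
        div_eq_iff (ne_of_gt hba)]
      ring

lemma kc_comp_max {H : ℝ → ℝ} {Kv s S : ℝ} (hK : 0 ≤ Kv) (hkc : KCfun Kv H)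
    (hsS : s ≤ S) (hmin : ∀ y, H S ≤ H y) (hs : H s = H S + Kv) :
    KCfun Kv (fun x => H (max x s)) := by
  intro a b u v hab hu hv huv
  dsimp only
  set m := u * a + v * b with hm
  have huva : u * a + v * a = a := by rw [← add_mul, huv, one_mul]
  have huvb : u * b + v * b = b := by rw [← add_mul, huv, one_mul]
  have hma : a ≤ m := by
    have := mul_le_mul_of_nonneg_left hab hv; simp only [hm]; linarith
  have hmb : m ≤ b := by
    have := mul_le_mul_of_nonneg_left hab hu; simp only [hm]; linarith
  have hHsb : ∀ y, s ≤ y → H s ≤ H y + Kv := fun y hy => by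
    have := hmin y; linarith
  have huvHs : u * H s + v * H s = H s := by rw [← add_mul, huv, one_mul]
  rcases le_or_gt b s with hbs | hsb
  · rw [max_eq_right (hmb.trans hbs), max_eq_right (hab.trans hbs), max_eq_right hbs]
    nlinarith [mul_nonneg hv hK]
  rcases le_or_gt s a with hsa | has
  · rw [max_eq_left (hsa.trans hma), max_eq_left hsa, max_eq_left (le_of_lt hsb)]
    exact hkc a b u v hab hu hv huv
  · rw [max_eq_right (le_of_lt has), max_eq_left (le_of_lt hsb)]
    rcases le_or_gt m s with hms | hsm
    · rw [max_eq_right hms]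
      have h2 : v * H s ≤ v * (H b + Kv) :=
        mul_le_mul_of_nonneg_left (hHsb b (le_of_lt hsb)) hv
      linarith
    · rw [max_eq_left (le_of_lt hsm)]
      have hsb' : s < b := hsm.trans_le hmb
      have hne : b - s ≠ 0 := ne_of_gt (by linarith)
      set w := (b - m) / (b - s) with hw
      have hw0 : 0 ≤ w := by
        apply div_nonneg <;> linarith
      have hw1 : w ≤ 1 := by
        rw [hw, div_le_one (by linarith)]; linarith
      have hws : w * (s - b) = m - b := by
        rw [hw, div_mul_eq_mul_div, div_eq_iff hne]; ring
      have hwm : w * s + (1 - w) * b = m := by linear_combination hws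
      have hkey := hkc s b w (1 - w) (le_of_lt hsb') hw0 (by linarith) (by ring)
      rw [hwm] at hkey
      have h1 : m ≤ u * s + v * b := by
        nlinarith [mul_le_mul_of_nonneg_left (le_of_lt has) hu]
      have hveq : v = 1 - u := by linarith
      rw [hveq] at h1
      have huw : u ≤ w := by
        by_contra hc
        push_neg at hc
        nlinarith [mul_pos (sub_pos.mpr hc) (sub_pos.mpr hsb')]
      have hHsB : H s ≤ H b + Kv := hHsb b (le_of_lt hsb')
      nlinarith [mul_nonneg (sub_nonneg.mpr huw) (sub_nonneg.mpr hHsB)]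

lemma ae_nonneg_of_Iio {μ : Measure ℝ} (hpos : μ (Set.Iio 0) = 0) : ∀ᵐ ξ ∂μ, 0 ≤ ξ := by
  rw [ae_iff]
  convert hpos using 2
  ext ξ; simp [not_le]

lemma integrable_comp_sub {μ : Measure ℝ} [IsProbabilityMeasure μ]
    (hpos0 : ∀ᵐ ξ ∂μ, 0 ≤ ξ) {f : ℝ → ℝ} (hmeas : Measurable f)
    (hξ : Integrable (fun ξ : ℝ => ξ) μ) {y A B : ℝ} (hB0 : 0 ≤ B)
    (hbd : ∀ z, z ≤ y → |f z| ≤ A + B * |z|) :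
    Integrable (fun ξ => f (y - ξ)) μ := by
  apply Integrable.mono' (g := fun ξ => A + B * |y| + B * ξ)
  · exact (integrable_const _).add (hξ.const_mul B)
  · exact (hmeas.comp (measurable_const.sub measurable_id)).aestronglyMeasurable
  · filter_upwards [hpos0] with ξ hξ0
    have h1 : |f (y - ξ)| ≤ A + B * |y - ξ| := hbd _ (by linarith)
    have h2 : |y - ξ| ≤ |y| + ξ := by
      rw [abs_le]
      constructor
      · linarith [neg_abs_le y]
      · linarith [le_abs_self y]
    have := mul_le_mul_of_nonneg_left h2 hB0
    rw [Real.norm_eq_abs]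
    linarith

lemma kc_integral {μ : Measure ℝ} [IsProbabilityMeasure μ] {f : ℝ → ℝ} {Kv : ℝ}
    (hkc : KCfun Kv f) (hint : ∀ y, Integrable (fun ξ => f (y - ξ)) μ) :
    KCfun Kv (fun y => ∫ ξ, f (y - ξ) ∂μ) := by
  intro a b u v hab hu hv huv
  dsimp only
  have hpt : ∀ ξ, f (u * a + v * b - ξ) ≤ u * f (a - ξ) + v * (f (b - ξ) + Kv) := by
    intro ξ
    have h := hkc (a - ξ) (b - ξ) u v (by linarith) hu hv huv
    have he : u * (a - ξ) + v * (b - ξ) = u * a + v * b - ξ := by linear_combination (-ξ) * huv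
    rwa [he] at h
  have ia : Integrable (fun ξ => u * f (a - ξ)) μ := (hint a).const_mul u
  have ibk : Integrable (fun ξ => f (b - ξ) + Kv) μ := (hint b).add (integrable_const Kv)
  have ib : Integrable (fun ξ => v * (f (b - ξ) + Kv)) μ := ibk.const_mul v
  calc ∫ ξ, f (u * a + v * b - ξ) ∂μ
      ≤ ∫ ξ, (u * f (a - ξ) + v * (f (b - ξ) + Kv)) ∂μ :=
        integral_mono (hint _) (ia.add ib) hpt
    _ = u * ∫ ξ, f (a - ξ) ∂μ + v * ((∫ ξ, f (b - ξ) ∂μ) + Kv) := by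
        rw [integral_add ia ib, integral_const_mul, integral_const_mul,
          integral_add (hint b) (integrable_const _), integral_const]
        simp [measure_univ]

lemma continuous_integral_shift {μ : Measure ℝ} [IsProbabilityMeasure μ]
    (hpos0 : ∀ᵐ ξ ∂μ, 0 ≤ ξ) {f : ℝ → ℝ} (hf : Continuous f)
    (hbdl : ∀ b : ℝ, ∃ Bb : ℝ, ∀ z, z ≤ b → |f z| ≤ Bb) :
    Continuous (fun y => ∫ ξ, f (y - ξ) ∂μ) := by
  rw [continuous_iff_continuousAt]
  intro y0
  obtain ⟨Bb, hBb⟩ := hbdl (y0 + 1)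
  apply continuousAt_of_dominated (bound := fun _ => Bb)
  · filter_upwards with y using
      (hf.comp (continuous_const.sub continuous_id)).aestronglyMeasurable
  · have hball : ∀ᶠ y in nhds y0, y ∈ Metric.ball y0 1 := Metric.ball_mem_nhds y0 one_pos
    filter_upwards [hball] with y hy
    filter_upwards [hpos0] with ξ hξ0
    rw [Real.norm_eq_abs]
    apply hBb
    have : |y - y0| < 1 := by simpa [Real.dist_eq] using hy
    have := abs_lt.mp this
    linarith
  · exact integrable_const _
  · filter_upwards with ξ using
      (hf.comp (continuous_id.sub continuous_const)).continuousAt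

lemma measurable_integral_shift {μ : Measure ℝ} [SFinite μ] {f : ℝ → ℝ} (hf : Measurable f) :
    Measurable fun y => ∫ ξ, f (y - ξ) ∂μ := by
  have h : Measurable (fun p : ℝ × ℝ => f (p.1 - p.2)) :=
    hf.comp (measurable_fst.sub measurable_snd)
  exact h.stronglyMeasurable.integral_prod_right'.measurable

theorem stmt2
    (T : ℕ) (hT : 2 ≤ T)
    (α : ℝ) (hα0 : 0 < α) (hα1 : α ≤ 1)
    (K : ℕ → ℝ) (hK0 : ∀ t, t < T → 0 ≤ K t)
    (hKmono : ∀ t, t + 2 ≤ T → α * K (t + 1) ≤ K t)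
    (ν : ℕ → MeasureTheory.Measure ℝ)
    (hprob : ∀ t, MeasureTheory.IsProbabilityMeasure (ν t))
    (hpos : ∀ t, ν t (Set.Iio 0) = 0)
    (F : ℕ → ℝ → ℝ) (hF : ∀ t x, F t x = (ν t (Set.Iic x)).toReal)
    (C : ℕ → ℝ → ℝ)
    (hCconv : ∀ t, t < T → ConvexOn ℝ Set.univ (C t))
    (hCcoer : ∀ t, t < T → Filter.Tendsto (C t) (Filter.cocompact ℝ) Filter.atTop)
    (Hstar Vstar : ℕ → ℝ → ℝ)
    (hVstarT : ∀ x, Vstar T x = 0)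
    (hHstar : ∀ t, t < T → ∀ y,
      Hstar t y = C t y + α * ∫ ξ, Vstar (t + 1) (y - ξ) ∂(ν t))
    (hVstar : ∀ t, t < T → ∀ x,
      Vstar t x = sInf ((fun y => K t * (if x < y then (1 : ℝ) else 0) + Hstar t y) '' Set.Ici x))
    (c : ℕ → ℝ) (G : ℕ → ℝ → ℝ)
    (hDint : ∀ t, t < T → MeasureTheory.Integrable (fun ξ : ℝ => ξ) (ν t))
    (hCdef : ∀ t, t < T → ∀ y,
      C t y = (c t - α * c (t + 1)) * y + G t y + α * c (t + 1) * ∫ ξ, ξ ∂(ν t))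
    (Sstar sstar : ℕ → ℝ)
    (hSstar : ∀ t, t < T → IsLeast {x | ∀ y, Hstar t x ≤ Hstar t y} (Sstar t))
    (hsstar : ∀ t, t < T →
      IsGreatest {x | x ≤ Sstar t ∧ Hstar t x = Hstar t (Sstar t) + K t} (sstar t))
    :
    (∀ vps : ℕ → ℝ → ℝ,
      (∀ x, vps T x = -(c T) * x) →
      (∀ t, t < T → ∀ x, vps t x =
        (if x < sstar t then K t else 0)
          + c t * ((if x < sstar t then Sstar t else x) - x)
          + G t (if x < sstar t then Sstar t else x)
          + α * ∫ ξ, vps (t + 1) ((if x < sstar t then Sstar t else x) - ξ) ∂(ν t)) →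
      ∀ t, t < T → ∀ x, vps t x = Vstar t x - c t * x)
    ∧ (∀ σ Sig : ℕ → ℝ, (∀ t, t < T → σ t ≤ Sig t) →
      ∀ vp : ℕ → ℝ → ℝ,
      (∀ x, vp T x = -(c T) * x) →
      (∀ t, t < T → ∀ x, vp t x =
        (if x < σ t then K t else 0)
          + c t * ((if x < σ t then Sig t else x) - x)
          + G t (if x < σ t then Sig t else x)
          + α * ∫ ξ, vp (t + 1) ((if x < σ t then Sig t else x) - ξ) ∂(ν t)) →
      ∀ t, t < T → ∀ x, Vstar t x - c t * x ≤ vp t x) := by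
  -- basic continuity facts
  have hC_cont : ∀ t, t < T → Continuous (C t) := fun t ht =>
    continuousOn_univ.mp ((hCconv t ht).continuousOn isOpen_univ)
  have hG_cont : ∀ t, t < T → Continuous (G t) := by
    intro t ht
    have hGe : G t = fun y =>
        C t y - (c t - α * c (t + 1)) * y - α * c (t + 1) * ∫ ξ, ξ ∂ν t := by
      funext y; rw [hCdef t ht y]; ring
    rw [hGe]
    exact ((hC_cont t ht).sub (continuous_const.mul continuous_id)).sub continuous_const
  -- bddBelow of the Bellman set
  have hbddB : ∀ t, t < T → ∀ x : ℝ,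
      (Hstar t (Sstar t)) ∈ lowerBounds
        ((fun y => K t * (if x < y then (1 : ℝ) else 0) + Hstar t y) '' Set.Ici x) := by
    intro t ht x
    rintro z ⟨y, hy, rfl⟩
    have h1 := (hSstar t ht).1 y
    have h2 : 0 ≤ K t * (if x < y then (1 : ℝ) else 0) := by
      apply mul_nonneg (hK0 t ht); split_ifs <;> norm_num
    dsimp only
    linarith
  -- the main structural induction on Vstar
  have main : ∀ d : ℕ, ∀ u : ℕ, u ≤ T → T - u ≤ d →
      (Continuous (Vstar u) ∧
       KCfun (if u < T then K u else 0) (Vstar u) ∧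
       (∀ b : ℝ, ∃ Bb : ℝ, ∀ z, z ≤ b → |Vstar u z| ≤ Bb) ∧
       (u < T → ∀ x, Vstar u x = Hstar u (max x (sstar u)))) := by
    have baseT : Continuous (Vstar T) ∧ KCfun (if T < T then K T else 0) (Vstar T) ∧
        (∀ b : ℝ, ∃ Bb : ℝ, ∀ z, z ≤ b → |Vstar T z| ≤ Bb) ∧
        (T < T → ∀ x, Vstar T x = Hstar T (max x (sstar T))) := by
      have hVT : Vstar T = fun _ => 0 := funext hVstarT
      refine ⟨hVT ▸ continuous_const, ?_, fun b => ⟨0, fun z _ => by rw [hVstarT]; simp⟩,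
        fun h => absurd h (lt_irrefl T)⟩
      intro a b u v hab hu hv huv
      simp only [hVstarT, if_neg (lt_irrefl T)]
      simp
    intro d
    induction d with
    | zero =>
      intro u huT hd
      have : u = T := by omega
      subst this; exact baseT
    | succ d ih =>
      intro u huT hd
      rcases eq_or_lt_of_le huT with rfl | huT'
      · exact baseT
      obtain ⟨hVcont, hVkc, hVbd, _⟩ := ih (u + 1) (by omega) (by omega)
      haveI := hprob u
      have hane := ae_nonneg_of_Iio (hpos u)
      have hVmeas : Measurable (Vstar (u + 1)) := hVcont.measurable
      have hIint : ∀ y, Integrable (fun ξ => Vstar (u + 1) (y - ξ)) (ν u) := by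
        intro y
        obtain ⟨Bb, hBb⟩ := hVbd y
        exact integrable_comp_sub hane hVmeas (hDint u huT') le_rfl
          (fun z hz => by simpa using hBb z hz)
      have hIcont : Continuous (fun y => ∫ ξ, Vstar (u + 1) (y - ξ) ∂ν u) :=
        continuous_integral_shift hane hVcont hVbd
      have hIkc : KCfun (if u + 1 < T then K (u + 1) else 0)
          (fun y => ∫ ξ, Vstar (u + 1) (y - ξ) ∂ν u) := kc_integral hVkc hIint
      have hKu : 0 ≤ K u := hK0 u huT'
      have hHeq : Hstar u = fun y => C u y + α * ∫ ξ, Vstar (u + 1) (y - ξ) ∂ν u :=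
        funext (hHstar u huT')
      have hHcont : Continuous (Hstar u) := by
        rw [hHeq]; exact (hC_cont u huT').add (continuous_const.mul hIcont)
      have hHkc : KCfun (K u) (Hstar u) := by
        rw [hHeq]
        have h1 : KCfun 0 (C u) := kc_of_convexOn (hCconv u huT') le_rfl
        have h2 : KCfun (α * (if u + 1 < T then K (u + 1) else 0))
            (fun y => α * ∫ ξ, Vstar (u + 1) (y - ξ) ∂ν u) := by
          intro a b uu vv hab hu hv huv
          have := hIkc a b uu vv hab hu hv huv
          dsimp only
          nlinarith
        have h3 := kc_add h1 h2
        apply kc_mono h3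
        rcases lt_or_ge (u + 1) T with h | h
        · rw [if_pos h, zero_add]; exact hKmono u (by omega)
        · rw [if_neg (not_lt.mpr h)]; simpa using hKu
      -- minimizer facts
      have hS : ∀ y, Hstar u (Sstar u) ≤ Hstar u y := (hSstar u huT').1
      have hss1 : sstar u ≤ Sstar u := (hsstar u huT').1.1
      have hss2 : Hstar u (sstar u) = Hstar u (Sstar u) + K u := (hsstar u huT').1.2
      -- L1 : no order is optimal right of s*
      have hL1 : ∀ x, sstar u ≤ x → ∀ y, x ≤ y → Hstar u x ≤ K u + Hstar u y := by
        intro x hsx y hxy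
        rcases le_or_gt x (Sstar u) with hxS | hSx
        · -- x ∈ [s*, S*] : H x ≤ H s* = K + H S* ≤ K + H y
          obtain ⟨uu, vv, hu, hv, huv, hx⟩ := exists_uv hsx hxS
          have h3 := hHkc (sstar u) (Sstar u) uu vv hss1 hu hv huv
          rw [hx, hss2] at h3
          have e : uu * (Hstar u (Sstar u) + K u) + vv * (Hstar u (Sstar u) + K u)
              = Hstar u (Sstar u) + K u := by rw [← add_mul, huv, one_mul]
          have h4 := hS y
          linarith
        · -- S* < x ≤ y
          obtain ⟨uu, vv, hu, hv, huv, hx⟩ := exists_uv (le_of_lt hSx) hxy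
          have h5 := hHkc (Sstar u) y uu vv ((le_of_lt hSx).trans hxy) hu hv huv
          rw [hx] at h5
          have h6 := hS y
          have e : uu * (Hstar u y + K u) + vv * (Hstar u y + K u)
              = Hstar u y + K u := by rw [← add_mul, huv, one_mul]
          have h7 : uu * Hstar u (Sstar u) ≤ uu * (Hstar u y + K u) :=
            mul_le_mul_of_nonneg_left (by linarith) hu
          linarith
      -- L2 : ordering is optimal left of s*
      have hL2 : ∀ x, x < sstar u → K u + Hstar u (Sstar u) ≤ Hstar u x := by
        intro x hx
        rcases eq_or_lt_of_le hss1 with he | hlt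
        · -- s* = S* forces K u = 0
          have hK0' : K u = 0 := by rw [he] at hss2; linarith
          rw [hK0', zero_add]; exact hS x
        · have hxS : x < Sstar u := hx.trans_le hss1
          set ww := (Sstar u - sstar u) / (Sstar u - x) with hww
          have hxSpos : (0:ℝ) < Sstar u - x := by linarith
          have hw0 : 0 ≤ ww := by apply div_nonneg <;> linarith
          have hw1 : ww ≤ 1 := by rw [hww, div_le_one hxSpos]; linarith
          have hws : ww * (x - Sstar u) = sstar u - Sstar u := by
            rw [hww, div_mul_eq_mul_div, div_eq_iff (ne_of_gt hxSpos)]; ring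
          have hwm : ww * x + (1 - ww) * Sstar u = sstar u := by linear_combination hws
          have hkey := hHkc x (Sstar u) ww (1 - ww) (le_of_lt hxS) hw0 (by linarith) (by ring)
          rw [hwm, hss2] at hkey
          have hwpos : 0 < ww := by
            rw [hww]; apply div_pos <;> linarith
          by_contra hc
          push_neg at hc
          nlinarith [mul_lt_mul_of_pos_left hc hwpos]
      -- shape of Vstar u
      have hshape : ∀ x, Vstar u x = Hstar u (max x (sstar u)) := by
        intro x
        rw [hVstar u huT' x]
        have hbdd : BddBelow
            ((fun y => K u * (if x < y then (1:ℝ) else 0) + Hstar u y) '' Set.Ici x) :=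
          ⟨_, hbddB u huT' x⟩
        have hmemx : Hstar u x ∈
            ((fun y => K u * (if x < y then (1:ℝ) else 0) + Hstar u y) '' Set.Ici x) :=
          ⟨x, Set.mem_Ici.mpr le_rfl, by
            dsimp only; rw [if_neg (lt_irrefl x), mul_zero, zero_add]⟩
        have hne : ((fun y => K u * (if x < y then (1:ℝ) else 0) + Hstar u y) ''
            Set.Ici x).Nonempty := ⟨_, hmemx⟩
        rcases le_or_gt (sstar u) x with hx | hx
        · rw [max_eq_left hx]
          apply le_antisymm
          · exact csInf_le hbdd hmemx
          · apply le_csInf hne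
            rintro z ⟨y, hy, rfl⟩
            simp only [Set.mem_Ici] at hy
            dsimp only
            rcases eq_or_lt_of_le hy with rfl | hxy
            · rw [if_neg (lt_irrefl x), mul_zero, zero_add]
            · rw [if_pos hxy, mul_one]
              have := hL1 x hx y (le_of_lt hxy)
              linarith
        · rw [max_eq_right (le_of_lt hx)]
          have hxS : x < Sstar u := hx.trans_le hss1
          apply le_antisymm
          · have hmemS : K u * 1 + Hstar u (Sstar u) ∈
                ((fun y => K u * (if x < y then (1:ℝ) else 0) + Hstar u y) '' Set.Ici x) :=
              ⟨Sstar u, Set.mem_Ici.mpr (le_of_lt hxS), by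
                dsimp only; rw [if_pos hxS]⟩
            have := csInf_le hbdd hmemS
            rw [hss2]
            linarith
          · apply le_csInf hne
            rintro z ⟨y, hy, rfl⟩
            simp only [Set.mem_Ici] at hy
            dsimp only
            rcases eq_or_lt_of_le hy with rfl | hxy
            · rw [if_neg (lt_irrefl x), mul_zero, zero_add, hss2]
              linarith [hL2 x hx]
            · rw [if_pos hxy, mul_one, hss2]
              have := hS y
              linarith
      have hVeq : Vstar u = fun x => Hstar u (max x (sstar u)) := funext hshape
      refine ⟨?_, ?_, ?_, fun _ => hshape⟩
      · rw [hVeq]; exact hHcont.comp (continuous_id.max continuous_const)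
      · rw [if_pos huT', hVeq]
        exact kc_comp_max hKu hHkc hss1 hS hss2
      · intro b
        obtain ⟨Bb, hBb⟩ := isCompact_Icc.exists_bound_of_continuousOn
          (s := Set.Icc (sstar u) (max b (sstar u))) hHcont.continuousOn
        refine ⟨Bb, fun z hz => ?_⟩
        rw [hshape z]
        have : max z (sstar u) ∈ Set.Icc (sstar u) (max b (sstar u)) := by
          constructor
          · exact le_max_right _ _
          · exact max_le_max_right _ hz
        simpa using hBb _ this
  have struct : ∀ u : ℕ, u ≤ T →
      (Continuous (Vstar u) ∧
       KCfun (if u < T then K u else 0) (Vstar u) ∧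
       (∀ b : ℝ, ∃ Bb : ℝ, ∀ z, z ≤ b → |Vstar u z| ≤ Bb) ∧
       (u < T → ∀ x, Vstar u x = Hstar u (max x (sstar u)))) :=
    fun u hu => main (T - u) u hu le_rfl
  have hVint : ∀ t, t < T → ∀ y : ℝ, Integrable (fun ξ => Vstar (t+1) (y - ξ)) (ν t) := by
    intro t ht y
    haveI := hprob t
    obtain ⟨hVcont, -, hVbd, -⟩ := struct (t+1) (by omega)
    obtain ⟨Bb, hBb⟩ := hVbd y
    exact integrable_comp_sub (ae_nonneg_of_Iio (hpos t)) hVcont.measurable (hDint t ht)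
      le_rfl (fun z hz => by simpa using hBb z hz)
  have hlinint : ∀ t, t < T → ∀ y : ℝ, Integrable (fun ξ => c (t+1) * (y - ξ)) (ν t) := by
    intro t ht y
    haveI := hprob t
    exact ((integrable_const y).sub (hDint t ht)).const_mul _
  have hlinval : ∀ t, t < T → ∀ y : ℝ,
      ∫ ξ, c (t+1) * (y - ξ) ∂ν t = c (t+1) * y - c (t+1) * ∫ ξ, ξ ∂ν t := by
    intro t ht y
    haveI := hprob t
    rw [integral_const_mul, integral_sub (integrable_const y) (hDint t ht), integral_const]
    simp only [probReal_univ, one_smul]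
    ring
  constructor
  · -- part 1 : the (s*, S*) policy is optimal
    intro vps hvT hvrec
    have P1 : ∀ d : ℕ, ∀ t, t ≤ T → T - t ≤ d → ∀ x, vps t x = Vstar t x - c t * x := by
      intro d
      induction d with
      | zero =>
        intro t htT hd x
        have : t = T := by omega
        subst this
        rw [hvT x, hVstarT x]; ring
      | succ d ih =>
        intro t htT hd x
        rcases eq_or_lt_of_le htT with rfl | ht
        · rw [hvT x, hVstarT x]; ring
        have iht : ∀ z, vps (t+1) z = Vstar (t+1) z - c (t+1) * z :=
          fun z => ih (t+1) (by omega) (by omega) z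
        have hcongy : ∀ y : ℝ, (∫ ξ, vps (t+1) (y - ξ) ∂ν t)
            = (∫ ξ, Vstar (t+1) (y - ξ) ∂ν t) - (c (t+1) * y - c (t+1) * ∫ ξ, ξ ∂ν t) := by
          intro y
          haveI := hprob t
          have h1 : (fun ξ => vps (t+1) (y - ξ))
              = fun ξ => Vstar (t+1) (y - ξ) - c (t+1) * (y - ξ) := funext fun ξ => iht _
          rw [h1, integral_sub (hVint t ht y) (hlinint t ht y), hlinval t ht y]
        obtain ⟨-, -, -, hshape⟩ := struct t (le_of_lt ht)
        have hss2 : Hstar t (sstar t) = Hstar t (Sstar t) + K t := (hsstar t ht).1.2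
        rw [hvrec t ht x]
        by_cases hxs : x < sstar t
        · simp only [if_pos hxs]
          rw [hcongy (Sstar t), hshape ht x, max_eq_right (le_of_lt hxs), hss2,
            hHstar t ht (Sstar t), hCdef t ht (Sstar t)]
          ring
        · simp only [if_neg hxs]
          rw [hcongy x, hshape ht x, max_eq_left (not_lt.mp hxs),
            hHstar t ht x, hCdef t ht x]
          ring
    exact fun t ht x => P1 (T - t) t (le_of_lt ht) le_rfl x
  · -- part 2 : any (σ, Σ) policy is at least as costly
    intro σ Sig hσ vp hvT hvrec
    have P2 : ∀ d : ℕ, ∀ t, t ≤ T → T - t ≤ d →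
        (Measurable (vp t) ∧
         (∀ b : ℝ, ∃ A B : ℝ, 0 ≤ B ∧ ∀ z, z ≤ b → |vp t z| ≤ A + B * |z|)) ∧
        (∀ x, Vstar t x - c t * x ≤ vp t x) := by
      intro d
      induction d with
      | zero =>
        intro t htT hd
        have : t = T := by omega
        subst this
        have hvpT : vp t = fun x => -(c t) * x := funext hvT
        refine ⟨⟨by rw [hvpT]; exact (continuous_const.mul continuous_id).measurable,
          fun b => ⟨0, |c t|, abs_nonneg _, fun z _ => ?_⟩⟩, fun x => ?_⟩
        · rw [hvT z, zero_add, abs_mul, abs_neg]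
        · rw [hvT x, hVstarT x]; apply le_of_eq; ring
      | succ d ih =>
        intro t htT hd
        rcases eq_or_lt_of_le htT with rfl | ht
        · have hvpT : vp t = fun x => -(c t) * x := funext hvT
          refine ⟨⟨by rw [hvpT]; exact (continuous_const.mul continuous_id).measurable,
            fun b => ⟨0, |c t|, abs_nonneg _, fun z _ => ?_⟩⟩, fun x => ?_⟩
          · rw [hvT z, zero_add, abs_mul, abs_neg]
          · rw [hvT x, hVstarT x]; apply le_of_eq; ring
        obtain ⟨⟨hmeas1, hgrow1⟩, hle1⟩ := ih (t+1) (by omega) (by omega)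
        haveI := hprob t
        have hane := ae_nonneg_of_Iio (hpos t)
        have hJint : ∀ y : ℝ, Integrable (fun ξ => vp (t+1) (y - ξ)) (ν t) := by
          intro y
          obtain ⟨A, B, hB0, hAB⟩ := hgrow1 y
          exact integrable_comp_sub hane hmeas1 (hDint t ht) hB0 hAB
        have hEnn : 0 ≤ ∫ ξ, ξ ∂ν t := integral_nonneg_of_ae hane
        -- growth and measurability at t
        have hvmeq : vp t = fun x => if x < σ t then
            K t + c t * (Sig t - x) + G t (Sig t) + α * ∫ ξ, vp (t+1) (Sig t - ξ) ∂ν t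
            else G t x + α * ∫ ξ, vp (t+1) (x - ξ) ∂ν t := by
          funext x
          rw [hvrec t ht x]
          by_cases hxσ : x < σ t
          · simp only [if_pos hxσ]
          · simp only [if_neg hxσ]; ring
        have hJmeas : Measurable (fun y => ∫ ξ, vp (t+1) (y - ξ) ∂ν t) :=
          measurable_integral_shift hmeas1
        have hmeas0 : Measurable (vp t) := by
          rw [hvmeq]
          apply Measurable.ite (measurableSet_lt measurable_id measurable_const)
          · exact ((continuous_const.add
              (continuous_const.mul (continuous_const.sub continuous_id))).add
              continuous_const).measurable.add measurable_const
          · exact (hG_cont t ht).measurable.add (measurable_const.mul hJmeas)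
        have hgrow0 : ∀ b : ℝ, ∃ A B : ℝ, 0 ≤ B ∧ ∀ z, z ≤ b → |vp t z| ≤ A + B * |z| := by
          intro b
          obtain ⟨A, B, hB0, hAB⟩ := hgrow1 (max b (Sig t))
          obtain ⟨BG, hBG⟩ := isCompact_Icc.exists_bound_of_continuousOn
            (s := Set.Icc (min (σ t) b) b) (hG_cont t ht).continuousOn
          have hBG0 : 0 ≤ BG := by
            have hm : min (σ t) b ∈ Set.Icc (min (σ t) b) b := ⟨le_rfl, min_le_right _ _⟩
            exact le_trans (abs_nonneg _) (by simpa using hBG _ hm)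
          set Ev := ∫ ξ, ξ ∂ν t with hEv
          have hJbd : ∀ y : ℝ, y ≤ max b (Sig t) →
              |∫ ξ, vp (t+1) (y - ξ) ∂ν t| ≤ |A| + B * |y| + B * Ev := by
            intro y hyb
            have h1 : |∫ ξ, vp (t+1) (y - ξ) ∂ν t| ≤ ∫ ξ, |vp (t+1) (y - ξ)| ∂ν t := by
              simpa [Real.norm_eq_abs] using
                norm_integral_le_integral_norm (fun ξ => vp (t+1) (y - ξ)) (μ := ν t)
            have hgint : Integrable (fun ξ => |A| + B * |y| + B * ξ) (ν t) :=
              (integrable_const _).add ((hDint t ht).const_mul B)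
            have h2 : ∫ ξ, |vp (t+1) (y - ξ)| ∂ν t ≤ ∫ ξ, (|A| + B * |y| + B * ξ) ∂ν t := by
              apply integral_mono_ae (hJint y).abs hgint
              filter_upwards [hane] with ξ hξ0
              have h3 : |vp (t+1) (y - ξ)| ≤ A + B * |y - ξ| := hAB _ (by linarith)
              have h4 : |y - ξ| ≤ |y| + ξ := by
                rw [abs_le]
                constructor
                · linarith [neg_abs_le y]
                · linarith [le_abs_self y]
              have h5 := mul_le_mul_of_nonneg_left h4 hB0
              have h6 : A ≤ |A| := le_abs_self A
              show |vp (t + 1) (y - ξ)| ≤ |A| + B * |y| + B * ξ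
              linarith
            have h7 : ∫ ξ, (|A| + B * |y| + B * ξ) ∂ν t = |A| + B * |y| + B * Ev := by
              rw [integral_add (integrable_const _) ((hDint t ht).const_mul B),
                integral_const, integral_const_mul]
              simp [measure_univ, hEv]
            linarith
          refine ⟨|K t| + |c t| * |Sig t| + |G t (Sig t)| + BG
              + α * (|A| + B * |Sig t| + B * Ev) + α * (|A| + B * Ev),
            |c t| + α * B,
            add_nonneg (abs_nonneg _) (mul_nonneg (le_of_lt hα0) hB0), ?_⟩
          intro z hz
          rw [hvmeq]
          have e4 : (0:ℝ) ≤ α * B * |z| :=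
            mul_nonneg (mul_nonneg (le_of_lt hα0) hB0) (abs_nonneg z)
          have e5 : (|c t| + α * B) * |z| = |c t| * |z| + α * B * |z| := by ring
          have e3 : (0:ℝ) ≤ α * (|A| + B * Ev) :=
            mul_nonneg (le_of_lt hα0) (add_nonneg (abs_nonneg A) (mul_nonneg hB0 hEnn))
          by_cases hzσ : z < σ t
          · simp only [if_pos hzσ]
            have hJS := hJbd (Sig t) (le_max_right _ _)
            have t1 := abs_add_le (K t + c t * (Sig t - z) + G t (Sig t))
              (α * ∫ ξ, vp (t+1) (Sig t - ξ) ∂ν t)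
            have t2 := abs_add_le (K t + c t * (Sig t - z)) (G t (Sig t))
            have t3 := abs_add_le (K t) (c t * (Sig t - z))
            have t4 : |c t * (Sig t - z)| ≤ |c t| * (|Sig t| + |z|) := by
              rw [abs_mul]
              exact mul_le_mul_of_nonneg_left (abs_sub _ _) (abs_nonneg _)
            have t5 : |α * ∫ ξ, vp (t+1) (Sig t - ξ) ∂ν t|
                ≤ α * (|A| + B * |Sig t| + B * Ev) := by
              rw [abs_mul, abs_of_pos hα0]
              exact mul_le_mul_of_nonneg_left hJS (le_of_lt hα0)
            have t6 : |c t| * (|Sig t| + |z|) = |c t| * |Sig t| + |c t| * |z| := by ring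
            linarith
          · simp only [if_neg hzσ]
            have hzb : z ∈ Set.Icc (min (σ t) b) b :=
              ⟨le_trans (min_le_left _ _) (not_lt.mp hzσ), hz⟩
            have hGz : |G t z| ≤ BG := by simpa using hBG z hzb
            have hJz := hJbd z (hz.trans (le_max_left _ _))
            have t1 := abs_add_le (G t z) (α * ∫ ξ, vp (t+1) (z - ξ) ∂ν t)
            have t5 : |α * ∫ ξ, vp (t+1) (z - ξ) ∂ν t| ≤ α * (|A| + B * |z| + B * Ev) := by
              rw [abs_mul, abs_of_pos hα0]
              exact mul_le_mul_of_nonneg_left hJz (le_of_lt hα0)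
            have e6 : α * (|A| + B * |z| + B * Ev) = α * (|A| + B * Ev) + α * B * |z| := by
              ring
            have e7 : (0:ℝ) ≤ α * (|A| + B * |Sig t| + B * Ev) :=
              mul_nonneg (le_of_lt hα0) (add_nonneg (add_nonneg (abs_nonneg A)
                (mul_nonneg hB0 (abs_nonneg _))) (mul_nonneg hB0 hEnn))
            have e8 : (0:ℝ) ≤ |c t| * |Sig t| := mul_nonneg (abs_nonneg _) (abs_nonneg _)
            have e9 : (0:ℝ) ≤ |c t| * |z| := mul_nonneg (abs_nonneg _) (abs_nonneg _)
            linarith [abs_nonneg (K t), abs_nonneg (G t (Sig t))]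
        -- the value inequality
        refine ⟨⟨hmeas0, hgrow0⟩, ?_⟩
        intro x
        have hbdd : BddBelow
            ((fun y => K t * (if x < y then (1:ℝ) else 0) + Hstar t y) '' Set.Ici x) :=
          ⟨_, hbddB t ht x⟩
        have hcomp : ∀ y : ℝ,
            (∫ ξ, Vstar (t+1) (y - ξ) ∂ν t) - (c (t+1) * y - c (t+1) * ∫ ξ, ξ ∂ν t)
              ≤ ∫ ξ, vp (t+1) (y - ξ) ∂ν t := by
          intro y
          have h1 : (∫ ξ, Vstar (t+1) (y - ξ) ∂ν t) - (c (t+1) * y - c (t+1) * ∫ ξ, ξ ∂ν t)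
              = ∫ ξ, (Vstar (t+1) (y - ξ) - c (t+1) * (y - ξ)) ∂ν t := by
            rw [integral_sub (hVint t ht y) (hlinint t ht y), hlinval t ht y]
          rw [h1]
          apply integral_mono ((hVint t ht y).sub (hlinint t ht y)) (hJint y)
          intro ξ
          exact hle1 (y - ξ)
        rw [hvrec t ht x]
        by_cases hxσ : x < σ t
        · simp only [if_pos hxσ]
          have hxS : x < Sig t := lt_of_lt_of_le hxσ (hσ t ht)
          have hmem : K t * 1 + Hstar t (Sig t) ∈
              ((fun y => K t * (if x < y then (1:ℝ) else 0) + Hstar t y) '' Set.Ici x) :=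
            ⟨Sig t, Set.mem_Ici.mpr (le_of_lt hxS), by dsimp only; rw [if_pos hxS]⟩
          have h1 : Vstar t x ≤ K t * 1 + Hstar t (Sig t) :=
            (hVstar t ht x) ▸ csInf_le hbdd hmem
          have h2 := hcomp (Sig t)
          have h3 := mul_le_mul_of_nonneg_left h2 (le_of_lt hα0)
          rw [hHstar t ht (Sig t), hCdef t ht (Sig t)] at h1
          nlinarith
        · simp only [if_neg hxσ]
          have hmem : K t * 0 + Hstar t x ∈
              ((fun y => K t * (if x < y then (1:ℝ) else 0) + Hstar t y) '' Set.Ici x) :=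
            ⟨x, Set.mem_Ici.mpr le_rfl, by dsimp only; rw [if_neg (lt_irrefl x)]⟩
          have h1 : Vstar t x ≤ K t * 0 + Hstar t x :=
            (hVstar t ht x) ▸ csInf_le hbdd hmem
          have h2 := hcomp x
          have h3 := mul_le_mul_of_nonneg_left h2 (le_of_lt hα0)
          rw [hHstar t ht x, hCdef t ht x] at h1
          nlinarith
    exact fun t ht x => (P2 (T - t) t (le_of_lt ht) le_rfl).2 x
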